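/- arXiv:2003.06165 — 2 statements merged into one kernel-verified Lean document; each statement's English description precedes it below -/
import Mathlib

section
/- Let p be prime, a ∈ F_p^*, H ≤ F_p^* a multiplicative subgroup, and x ∈ F_p^*. If |∑_{u∈H} ∑_{v∈H} e_p(axuv)| ≥ |H|^2 Δ for some Δ > 0, then ∑_{v1,v2,v3 ∈ H} |∑_{u∈H} e_p(axu(v1+v2+v3))| ≥ |H|^4 Δ^3. -/
open scoped Classical

/-- `ep p z = exp(2πi z/p)`, where `z ∈ F_p` is lifted to `{0,...,p-1}`. -/
noncomputable def ep (p : ℕ) (z : ZMod p) : ℂ :=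
  Complex.exp (2 * Real.pi * Complex.I * z.val / p)

lemma ep_eq_pow (p : ℕ) (z : ZMod p) :
    ep p z = Complex.exp (2 * Real.pi * Complex.I / p) ^ z.val := by
  rw [ep, ← Complex.exp_nat_mul]
  congr 1
  ring

lemma zeta_pow_p (p : ℕ) (hp : p ≠ 0) :
    Complex.exp (2 * Real.pi * Complex.I / p) ^ p = 1 := by
  rw [← Complex.exp_nat_mul]
  have hp' : (p : ℂ) ≠ 0 := Nat.cast_ne_zero.mpr hp
  rw [show (p : ℂ) * (2 * Real.pi * Complex.I / p) = 2 * Real.pi * Complex.I by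
    field_simp]
  exact Complex.exp_two_pi_mul_I

lemma pow_mod_eq (ζ : ℂ) (p m : ℕ) (h : ζ ^ p = 1) : ζ ^ (m % p) = ζ ^ m := by
  conv_rhs => rw [← Nat.mod_add_div m p]
  rw [pow_add, pow_mul, h, one_pow, mul_one]

lemma ep_add (p : ℕ) [NeZero p] (z w : ZMod p) :
    ep p (z + w) = ep p z * ep p w := by
  rw [ep_eq_pow, ep_eq_pow, ep_eq_pow, ← pow_add, ZMod.val_add,
    pow_mod_eq _ p _ (zeta_pow_p p (NeZero.ne p))]

theorem stmt_11 (p : ℕ) [Fact p.Prime] (H : Subgroup (ZMod p)ˣ) (a : (ZMod p)ˣ)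
    (x : (ZMod p)ˣ) (Δ : ℝ) (hΔ : 0 < Δ)
    (hlow : ‖(∑ u : H, ∑ v : H,
        ep p ((a : ZMod p) * (x : ZMod p) * ((u : (ZMod p)ˣ) : ZMod p)
          * ((v : (ZMod p)ˣ) : ZMod p)))‖
      ≥ (Nat.card H : ℝ) ^ 2 * Δ) :
    ∑ v₁ : H, ∑ v₂ : H, ∑ v₃ : H,
        ‖(∑ u : H,
          ep p ((a : ZMod p) * (x : ZMod p) * ((u : (ZMod p)ˣ) : ZMod p)
            * (((v₁ : (ZMod p)ˣ) : ZMod p) + ((v₂ : (ZMod p)ˣ) : ZMod p)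
              + ((v₃ : (ZMod p)ˣ) : ZMod p))))‖
      ≥ (Nat.card H : ℝ) ^ 4 * Δ ^ 3 := by
  set A : ZMod p := (a : ZMod p) * (x : ZMod p) with hA
  set T : ℂ := ∑ v : H, ep p (A * ((v : (ZMod p)ˣ) : ZMod p)) with hT
  set N : ℕ := Nat.card H with hN
  have hNcard : N = Fintype.card H := Nat.card_eq_fintype_card
  have hNpos : 0 < N := by rw [hNcard]; exact Fintype.card_pos
  -- key: inner sum is independent of u
  have hkey : ∀ u : H,
      (∑ v : H, ep p (A * ((u : (ZMod p)ˣ) : ZMod p) * ((v : (ZMod p)ˣ) : ZMod p))) = T := by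
    intro u
    refine Fintype.sum_equiv (Equiv.mulLeft u) _ _ fun v => ?_
    congr 1
    simp [mul_assoc]
  -- hypothesis gives N*Δ ≤ |T|
  have hdouble : (∑ u : H, ∑ v : H,
      ep p (A * ((u : (ZMod p)ˣ) : ZMod p) * ((v : (ZMod p)ˣ) : ZMod p))) = (N : ℂ) * T := by
    simp_rw [hkey]
    rw [Finset.sum_const, Finset.card_univ, ← hNcard, nsmul_eq_mul]
  rw [hdouble] at hlow
  rw [norm_mul, Complex.norm_natCast] at hlow
  have hTlow : (N : ℝ) * Δ ≤ ‖T‖ := by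
    have h2 : (N : ℝ) * ((N : ℝ) * Δ) ≤ (N : ℝ) * ‖T‖ := by
      calc (N : ℝ) * ((N : ℝ) * Δ) = (N : ℝ) ^ 2 * Δ := by ring
        _ ≤ (N : ℝ) * ‖T‖ := hlow
    exact le_of_mul_le_mul_left h2 (by exact_mod_cast hNpos)
  -- cube expansion
  have hTcube : ∀ u : H,
      (∑ v₁ : H, ∑ v₂ : H, ∑ v₃ : H,
        ep p (A * ((u : (ZMod p)ˣ) : ZMod p)
          * (((v₁ : (ZMod p)ˣ) : ZMod p) + ((v₂ : (ZMod p)ˣ) : ZMod p)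
            + ((v₃ : (ZMod p)ˣ) : ZMod p)))) = T ^ 3 := by
    intro u
    have hexp : ∀ v₁ v₂ v₃ : H,
        ep p (A * ((u : (ZMod p)ˣ) : ZMod p)
          * (((v₁ : (ZMod p)ˣ) : ZMod p) + ((v₂ : (ZMod p)ˣ) : ZMod p)
            + ((v₃ : (ZMod p)ˣ) : ZMod p)))
        = ep p (A * ((u : (ZMod p)ˣ) : ZMod p) * ((v₁ : (ZMod p)ˣ) : ZMod p))
          * ep p (A * ((u : (ZMod p)ˣ) : ZMod p) * ((v₂ : (ZMod p)ˣ) : ZMod p))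
          * ep p (A * ((u : (ZMod p)ˣ) : ZMod p) * ((v₃ : (ZMod p)ˣ) : ZMod p)) := by
      intro v₁ v₂ v₃
      rw [mul_add, mul_add, ep_add, ep_add]
    simp_rw [hexp]
    simp_rw [mul_assoc]
    simp_rw [← Finset.mul_sum]
    simp_rw [← Finset.sum_mul]
    simp_rw [← mul_assoc, hkey u]
    ring
  -- triangle inequality
  have tri : ‖(∑ v₁ : H, ∑ v₂ : H, ∑ v₃ : H, ∑ u : H,
        ep p (A * ((u : (ZMod p)ˣ) : ZMod p)
          * (((v₁ : (ZMod p)ˣ) : ZMod p) + ((v₂ : (ZMod p)ˣ) : ZMod p)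
            + ((v₃ : (ZMod p)ˣ) : ZMod p))))‖
      ≤ ∑ v₁ : H, ∑ v₂ : H, ∑ v₃ : H, ‖(∑ u : H,
        ep p (A * ((u : (ZMod p)ˣ) : ZMod p)
          * (((v₁ : (ZMod p)ˣ) : ZMod p) + ((v₂ : (ZMod p)ˣ) : ZMod p)
            + ((v₃ : (ZMod p)ˣ) : ZMod p))))‖ := by
    refine (norm_sum_le _ _).trans (Finset.sum_le_sum fun v₁ _ => ?_)
    exact (norm_sum_le _ _).trans (Finset.sum_le_sum fun v₂ _ => norm_sum_le _ _)
  -- swap sums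
  have swap : (∑ v₁ : H, ∑ v₂ : H, ∑ v₃ : H, ∑ u : H,
        ep p (A * ((u : (ZMod p)ˣ) : ZMod p)
          * (((v₁ : (ZMod p)ˣ) : ZMod p) + ((v₂ : (ZMod p)ˣ) : ZMod p)
            + ((v₃ : (ZMod p)ˣ) : ZMod p))))
      = ∑ u : H, ∑ v₁ : H, ∑ v₂ : H, ∑ v₃ : H,
        ep p (A * ((u : (ZMod p)ˣ) : ZMod p)
          * (((v₁ : (ZMod p)ˣ) : ZMod p) + ((v₂ : (ZMod p)ˣ) : ZMod p)
            + ((v₃ : (ZMod p)ˣ) : ZMod p))) := by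
    refine Eq.trans (Finset.sum_congr rfl fun v₁ _ => Finset.sum_congr rfl fun v₂ _ =>
      Finset.sum_comm) ?_
    refine Eq.trans (Finset.sum_congr rfl fun v₁ _ => Finset.sum_comm) ?_
    exact Finset.sum_comm
  have hval : ‖(∑ u : H, (T : ℂ) ^ 3)‖ = (N : ℝ) * ‖T‖ ^ 3 := by
    rw [Finset.sum_const, Finset.card_univ, ← hNcard, nsmul_eq_mul, norm_mul,
      Complex.norm_natCast, norm_pow]
  calc ∑ v₁ : H, ∑ v₂ : H, ∑ v₃ : H, ‖(∑ u : H,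
        ep p (A * ((u : (ZMod p)ˣ) : ZMod p)
          * (((v₁ : (ZMod p)ˣ) : ZMod p) + ((v₂ : (ZMod p)ˣ) : ZMod p)
            + ((v₃ : (ZMod p)ˣ) : ZMod p))))‖
      ≥ ‖(∑ v₁ : H, ∑ v₂ : H, ∑ v₃ : H, ∑ u : H,
        ep p (A * ((u : (ZMod p)ˣ) : ZMod p)
          * (((v₁ : (ZMod p)ˣ) : ZMod p) + ((v₂ : (ZMod p)ˣ) : ZMod p)
            + ((v₃ : (ZMod p)ˣ) : ZMod p))))‖ := tri
    _ = ‖(∑ u : H, (T : ℂ) ^ 3)‖ := by rw [swap]; exact congrArg _ (Finset.sum_congr rfl fun u _ => hTcube u)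
    _ = (N : ℝ) * ‖T‖ ^ 3 := hval
    _ ≥ (N : ℝ) * ((N : ℝ) * Δ) ^ 3 := by
        have h0 : (0:ℝ) ≤ (N : ℝ) * Δ := by positivity
        gcongr
    _ = (N : ℝ) ^ 4 * Δ ^ 3 := by ring
end

section
/- Let p be prime, H ≤ F_p^* a multiplicative subgroup with |H| < p^{1/2}, N an interval of N consecutive integers, and a coprime to p. Assume J(N,H) ≤ p^{o(1)}(|H|^2 + N|H| + N^2|H|^2/p + N|H|^{7/4}/p^{1/4}) and T_3(H) ≪ |H|^4 log|H|. Then ∑_{n∈N} |∑_{x∈H} e_p(anx)| ≤ N|H| · Δ2^{1/6} · p^{o(1)}, where Δ2 = (p / (N |H|^3)) · Γ(N,H) and Γ(N,H) = 1 + |H|/N + N|H|/p + |H|^{3/4}/p^{1/4}. -/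
open scoped Classical

/-- number of `2m`-tuples in `H^{2m}` with `h₁+⋯+h_m ≡ h_{m+1}+⋯+h_{2m} (mod p)`. -/
noncomputable def T (p m : ℕ) (H : Subgroup (ZMod p)ˣ) : ℕ :=
  Nat.card {t : (Fin m → H) × (Fin m → H) //
    (∑ i, ((t.1 i : (ZMod p)ˣ) : ZMod p)) = ∑ i, ((t.2 i : (ZMod p)ˣ) : ZMod p)}

/-- number of quadruples `(n₁,n₂,h₁,h₂) ∈ 𝒩² × H²` with `n₁h₁ ≡ n₂h₂ (mod p)`,
where `𝒩 = {L+1,...,L+N}`. -/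
noncomputable def J (p : ℕ) (L : ℤ) (N : ℕ) (H : Subgroup (ZMod p)ˣ) : ℕ :=
  Nat.card {q : (ℤ × ℤ) × H × H //
    q.1.1 ∈ Finset.Icc (L + 1) (L + N) ∧ q.1.2 ∈ Finset.Icc (L + 1) (L + N) ∧
      (q.1.1 : ZMod p) * ((q.2.1 : (ZMod p)ˣ) : ZMod p)
        = (q.1.2 : ZMod p) * ((q.2.2 : (ZMod p)ˣ) : ZMod p)}

lemma ep_eq_std {p : ℕ} [NeZero p] (z : ZMod p) : ep p z = ZMod.stdAddChar z := by
  have := ZMod.stdAddChar_coe (N := p) (z.val : ℤ)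
  rw [ep]
  rw [show (((z.val : ℤ) : ZMod p)) = z by push_cast; simp [ZMod.natCast_zmod_val]] at this
  rw [this]
  norm_num

lemma orth {p : ℕ} [NeZero p] (t : ZMod p) :
    ∑ x : ZMod p, ZMod.stdAddChar (t * x) = if t = 0 then (p : ℂ) else 0 := by
  have := AddChar.sum_mulShift (ψ := ZMod.stdAddChar (N := p)) t (ZMod.isPrimitive_stdAddChar p)
  simp only [mul_comm] at this ⊢
  rw [this, ZMod.card]
  split_ifs <;> simp

lemma addchar_prod3 {p : ℕ} [NeZero p] (u : Fin 3 → ZMod p) :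
    ∏ i : Fin 3, ZMod.stdAddChar (u i) = ZMod.stdAddChar (∑ i, u i) := by
  rw [Fin.prod_univ_three, Fin.sum_univ_three, AddChar.map_add_eq_mul, AddChar.map_add_eq_mul]

lemma conj_std {p : ℕ} [NeZero p] (z : ZMod p) :
    (starRingEnd ℂ) (ZMod.stdAddChar z) = ZMod.stdAddChar (-z) := by
  rw [ZMod.stdAddChar_apply, ZMod.stdAddChar_apply, ← Circle.coe_inv_eq_conj,
    ← AddChar.map_neg_eq_inv]

section main
variable {p : ℕ} [Fact p.Prime] (H : Subgroup (ZMod p)ˣ)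

/-- `g H λ = ∑_{x ∈ H} e_p(λ x)` -/
noncomputable def g (lam : ZMod p) : ℂ :=
  ∑ x : H, ZMod.stdAddChar (lam * ((x : (ZMod p)ˣ) : ZMod p))

lemma g_cube (lam : ZMod p) :
    g H lam ^ 3 = ∑ t : Fin 3 → H,
      ZMod.stdAddChar (lam * ∑ i, ((t i : (ZMod p)ˣ) : ZMod p)) := by
  have : g H lam ^ 3 = ∏ _i : Fin 3, g H lam := by simp [Finset.prod_const]
  rw [this, g, Finset.prod_univ_sum]
  rw [Fintype.piFinset_univ]
  refine Finset.sum_congr rfl fun t _ => ?_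
  rw [addchar_prod3, Finset.mul_sum]

lemma g_conj_cube (lam : ZMod p) :
    (starRingEnd ℂ) (g H lam) ^ 3 = ∑ t : Fin 3 → H,
      ZMod.stdAddChar (-(lam * ∑ i, ((t i : (ZMod p)ˣ) : ZMod p))) := by
  have : (starRingEnd ℂ) (g H lam) = g H (-lam) := by
    rw [g, map_sum]
    refine Finset.sum_congr rfl fun x _ => ?_
    rw [conj_std, neg_mul]
  rw [this, g_cube]
  refine Finset.sum_congr rfl fun t _ => ?_
  rw [neg_mul]

/-- Parseval-type identity:  `∑_λ |g λ|⁶ = p * T₃(H)`. -/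
lemma parseval6 :
    ∑ lam : ZMod p, (‖g H lam‖) ^ 6 = (p : ℝ) * T p 3 H := by
  have key : ∑ lam : ZMod p, ((‖g H lam‖ : ℂ)) ^ 6
      = (p : ℂ) * T p 3 H := by
    have habs : ∀ z : ℂ, ((‖z‖ : ℂ)) ^ 6 = z ^ 3 * (starRingEnd ℂ) z ^ 3 := by
      intro z
      rw [← mul_pow, Complex.mul_conj, Complex.normSq_eq_norm_sq]
      push_cast
      ring
    simp_rw [habs, g_cube, g_conj_cube, Finset.sum_mul_sum]
    rw [Finset.sum_comm]
    have inner_eq : ∀ t : Fin 3 → H, ∀ s : Fin 3 → H,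
        ∑ lam : ZMod p, ZMod.stdAddChar (lam * ∑ i, ((t i : (ZMod p)ˣ) : ZMod p)) *
          ZMod.stdAddChar (-(lam * ∑ i, ((s i : (ZMod p)ˣ) : ZMod p)))
        = if (∑ i, ((t i : (ZMod p)ˣ) : ZMod p)) = ∑ i, ((s i : (ZMod p)ˣ) : ZMod p)
            then (p : ℂ) else 0 := by
      intro t s
      have : ∀ lam : ZMod p,
          ZMod.stdAddChar (lam * ∑ i, ((t i : (ZMod p)ˣ) : ZMod p)) *
            ZMod.stdAddChar (-(lam * ∑ i, ((s i : (ZMod p)ˣ) : ZMod p)))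
          = ZMod.stdAddChar
              ((∑ i, ((t i : (ZMod p)ˣ) : ZMod p) - ∑ i, ((s i : (ZMod p)ˣ) : ZMod p)) * lam) := by
        intro lam
        rw [← AddChar.map_add_eq_mul]
        congr 1
        ring
      simp_rw [this]
      rw [orth]
      congr 1
      simp [sub_eq_zero]
    conv_lhs => enter [2, t]; rw [Finset.sum_comm]
    simp_rw [inner_eq]
    have hT : (T p 3 H : ℂ) = ((Finset.univ.filter
        (fun u : (Fin 3 → H) × (Fin 3 → H) =>
          (∑ i, ((u.1 i : (ZMod p)ˣ) : ZMod p)) = ∑ i, ((u.2 i : (ZMod p)ˣ) : ZMod p))).card : ℂ) := by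
      norm_cast
      rw [T, Nat.card_eq_fintype_card, Fintype.card_subtype]
    rw [hT, ← Fintype.sum_prod_type']
    rw [← Finset.sum_filter, Finset.sum_const, nsmul_eq_mul, mul_comm]
  have cast_eq : ((∑ lam : ZMod p, (‖g H lam‖) ^ 6 : ℝ) : ℂ)
      = (((p : ℝ) * T p 3 H : ℝ) : ℂ) := by
    push_cast
    exact key
  exact_mod_cast cast_eq


lemma g_mul (lam : ZMod p) (h : H) :
    g H (lam * ((h : (ZMod p)ˣ) : ZMod p)) = g H lam := by
  rw [g, g]
  refine Fintype.sum_equiv (Equiv.mulLeft h) _ _ fun x => ?_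
  congr 1
  simp [Equiv.coe_mulLeft, mul_assoc]

variable (L : ℤ) (N : ℕ) (a : (ZMod p)ˣ)

/-- the finset `𝒩 × H`. -/
noncomputable def PP : Finset (ℤ × H) := (Finset.Icc (L + 1) (L + N)) ×ˢ Finset.univ

/-- `key (n, h) = a n h ∈ F_p`. -/
noncomputable def key (q : ℤ × H) : ZMod p :=
  (a : ZMod p) * (q.1 : ZMod p) * ((q.2 : (ZMod p)ˣ) : ZMod p)

/-- `r λ` = number of `(n,h) ∈ 𝒩 × H` with `a n h = λ`. -/
noncomputable def r (lam : ZMod p) : ℕ :=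
  ((PP H L N).filter fun q => key H a q = lam).card

lemma sum_r : ∑ lam : ZMod p, r H L N a lam = N * Nat.card H := by
  simp only [r]
  rw [← Finset.card_eq_sum_card_fiberwise (f := key H a) (t := Finset.univ)
    (fun q _ => Finset.mem_univ _)]
  rw [PP, Finset.card_product, Int.card_Icc, Finset.card_univ, Nat.card_eq_fintype_card]
  congr 1
  omega

lemma fiber_sum (F : ZMod p → ℝ) :
    ∑ q ∈ PP H L N, F (key H a q) = ∑ lam : ZMod p, (r H L N a lam : ℝ) * F lam := by
  rw [← Finset.sum_fiberwise_of_maps_to (g := key H a) (t := Finset.univ)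
    (fun q _ => Finset.mem_univ _)]
  refine Finset.sum_congr rfl fun lam _ => ?_
  rw [r, Finset.sum_congr rfl (fun q hq => by
    rw [(Finset.mem_filter.mp hq).2]), Finset.sum_const, nsmul_eq_mul]

lemma sum_r_sq_le : ∑ lam : ZMod p, (r H L N a lam) ^ 2 ≤ J p L N H := by
  classical
  set D : Finset ((ℤ × H) × (ℤ × H)) :=
    (PP H L N ×ˢ PP H L N).filter (fun q => key H a q.1 = key H a q.2) with hD
  have hcard : ∑ lam : ZMod p, (r H L N a lam) ^ 2 = D.card := by
    rw [Finset.card_eq_sum_card_fiberwise (f := fun q => key H a q.1) (t := Finset.univ)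
      (fun q _ => Finset.mem_univ _)]
    refine Finset.sum_congr rfl fun lam _ => ?_
    simp only [r]
    rw [sq, ← Finset.card_product]
    congr 1
    ext q
    simp only [hD, Finset.mem_filter, Finset.mem_product]
    constructor
    · rintro ⟨⟨h1, h4⟩, h2, h5⟩
      exact ⟨⟨⟨h1, h2⟩, h4.trans h5.symm⟩, h4⟩
    · rintro ⟨⟨⟨h1, h2⟩, h3⟩, h4⟩
      exact ⟨⟨h1, h4⟩, h2, h3.symm.trans h4⟩
  rw [hcard, J]
  have hane : ((a : (ZMod p)ˣ) : ZMod p) ≠ 0 := Units.ne_zero _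
  have hfin : Finite {q : (ℤ × ℤ) × H × H //
      q.1.1 ∈ Finset.Icc (L + 1) (L + N) ∧ q.1.2 ∈ Finset.Icc (L + 1) (L + N) ∧
        (q.1.1 : ZMod p) * ((q.2.1 : (ZMod p)ˣ) : ZMod p)
          = (q.1.2 : ZMod p) * ((q.2.2 : (ZMod p)ˣ) : ZMod p)} := by
    refine Finite.of_injective (fun x =>
      ((⟨x.1.1.1, x.2.1⟩ : {z : ℤ // z ∈ Finset.Icc (L + 1) (L + N)}),
       (⟨x.1.1.2, x.2.2.1⟩ : {z : ℤ // z ∈ Finset.Icc (L + 1) (L + N)}),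
       x.1.2.1, x.1.2.2)) ?_
    rintro ⟨⟨⟨n1, n2⟩, ⟨h1, h2⟩⟩, _⟩ ⟨⟨⟨m1, m2⟩, ⟨k1, k2⟩⟩, _⟩ h
    simp only [Subtype.mk.injEq, Prod.mk.injEq] at h ⊢
    exact ⟨⟨h.1, h.2.1⟩, h.2.2⟩
  rw [← Nat.card_eq_finsetCard]
  refine Nat.card_le_card_of_injective (fun x => ⟨((x.1.1.1, x.1.2.1), x.1.1.2, x.1.2.2), ?_⟩) ?_
  · have hx := x.2
    simp only [hD, Finset.mem_filter, Finset.mem_product, PP, Finset.mem_product] at hx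
    obtain ⟨⟨⟨hm1, -⟩, hm2, -⟩, heq⟩ := hx
    refine ⟨hm1, hm2, ?_⟩
    have := heq
    rw [key, key] at this
    apply mul_left_cancel₀ hane
    rw [← mul_assoc, ← mul_assoc]
    exact this
  · rintro ⟨⟨⟨n1, h1⟩, ⟨n2, h2⟩⟩, hx⟩ ⟨⟨⟨m1, k1⟩, ⟨m2, k2⟩⟩, hy⟩ h
    simp only [Subtype.mk.injEq, Prod.mk.injEq] at h ⊢
    exact ⟨⟨h.1.1, h.2.1⟩, h.1.2, h.2.2⟩

end main

set_option maxHeartbeats 2000000 in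
theorem stmt_14 (CJ C₃ : ℝ) (hCJ : 0 < CJ) (hC₃ : 0 < C₃) :
    ∀ ε > (0 : ℝ), ∃ C > (0 : ℝ),
      ∀ (p : ℕ) [Fact p.Prime] (L : ℤ) (N : ℕ) (H : Subgroup (ZMod p)ˣ) (a : (ZMod p)ˣ),
      (Nat.card H : ℝ) < (p : ℝ) ^ ((1 : ℝ) / 2) →
      -- hypothesis on `J(𝒩, H)`
      (J p L N H : ℝ) ≤ CJ * (p : ℝ) ^ ε *
          ((Nat.card H : ℝ) ^ (2 : ℕ) + N * (Nat.card H : ℝ)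
            + (N : ℝ) ^ (2 : ℕ) * (Nat.card H : ℝ) ^ (2 : ℕ) / p
            + N * (Nat.card H : ℝ) ^ ((7 : ℝ) / 4) / (p : ℝ) ^ ((1 : ℝ) / 4)) →
      -- hypothesis on `T₃(H)`
      (T p 3 H : ℝ) ≤ C₃ * (Nat.card H : ℝ) ^ (4 : ℕ) * Real.log (Nat.card H) →
      (∑ n ∈ Finset.Icc (L + 1) (L + N),
          ‖∑ x : H,
            ep p ((a : ZMod p) * (n : ZMod p) * ((x : (ZMod p)ˣ) : ZMod p))‖)
        ≤ C * N * (Nat.card H : ℝ)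
            * (((p : ℝ) / (N * (Nat.card H : ℝ) ^ (3 : ℕ)))
              * (1 + (Nat.card H : ℝ) / N + N * (Nat.card H : ℝ) / p
                  + (Nat.card H : ℝ) ^ ((3 : ℝ) / 4) / (p : ℝ) ^ ((1 : ℝ) / 4)))
              ^ ((1 : ℝ) / 6)
            * (p : ℝ) ^ ε := by
  intro ε hε
  refine ⟨max 1 ((CJ * C₃ / (5 * ε)) ^ ((1 : ℝ) / 6)),
    lt_of_lt_of_le one_pos (le_max_left _ _), ?_⟩
  set C := max 1 ((CJ * C₃ / (5 * ε)) ^ ((1 : ℝ) / 6)) with hCdef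
  have hC0 : (0 : ℝ) < C := lt_of_lt_of_le one_pos (le_max_left _ _)
  intro p _ L N H a hHp hJbound hTbound
  have hp : p.Prime := Fact.out
  have hp2 : (2 : ℝ) ≤ (p : ℝ) := by exact_mod_cast hp.two_le
  have hp0 : (0 : ℝ) < (p : ℝ) := by linarith
  set h : ℝ := (Nat.card H : ℝ) with hh
  have hh1 : (1 : ℝ) ≤ h := by
    have : 0 < Nat.card H := Nat.card_pos
    rw [hh]; exact_mod_cast this
  have hh0 : (0 : ℝ) < h := by linarith
  have hLHS : (∑ n ∈ Finset.Icc (L + 1) (L + N),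
      ‖∑ x : H,
        ep p ((a : ZMod p) * (n : ZMod p) * ((x : (ZMod p)ˣ) : ZMod p))‖)
      = ∑ n ∈ Finset.Icc (L + 1) (L + N),
          ‖g H ((a : ZMod p) * (n : ZMod p))‖ := by
    refine Finset.sum_congr rfl fun n _ => ?_
    congr 1
    rw [g]
    exact Finset.sum_congr rfl fun x _ => by rw [ep_eq_std]
  rw [hLHS]
  rcases Nat.eq_zero_or_pos N with hN0 | hNpos
  · subst hN0
    have hemp : Finset.Icc (L + 1) (L + (0 : ℕ)) = ∅ := by
      apply Finset.Icc_eq_empty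
      push_cast
      omega
    rw [hemp]
    simp
  -- main case
  have hn1 : (1 : ℝ) ≤ (N : ℝ) := by exact_mod_cast hNpos
  have hn0 : (0 : ℝ) < (N : ℝ) := by linarith
  set S := ∑ n ∈ Finset.Icc (L + 1) (L + N),
    ‖g H ((a : ZMod p) * (n : ZMod p))‖ with hS
  have hS0 : 0 ≤ S := Finset.sum_nonneg fun n _ => norm_nonneg _
  set Q := ∑ n ∈ Finset.Icc (L + 1) (L + N),
    ‖g H ((a : ZMod p) * (n : ZMod p))‖ ^ 2 with hQ
  have hQ0 : 0 ≤ Q := by rw [hQ]; positivity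
  have hcardIcc : (((Finset.Icc (L + 1) (L + (N:ℤ))).card : ℕ) : ℝ) = (N : ℝ) := by
    rw [Int.card_Icc]
    norm_cast
    omega
  have f1 : S ^ 2 ≤ (N : ℝ) * Q := by
    have := sq_sum_le_card_mul_sum_sq (s := Finset.Icc (L + 1) (L + (N:ℤ)))
      (f := fun n => ‖g H ((a : ZMod p) * (n : ZMod p))‖)
    rw [hcardIcc] at this
    exact this
  have hsum_r : ∑ lam : ZMod p, (r H L N a lam : ℝ) = (N : ℝ) * h := by
    rw [← Nat.cast_sum, sum_r]
    push_cast
    ring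
  have hsum_r2 : ∑ lam : ZMod p, ((r H L N a lam : ℝ)) ^ 2 ≤ (J p L N H : ℝ) := by
    have := sum_r_sq_le H L N a
    exact_mod_cast this
  set R := ∑ lam : ZMod p, (r H L N a lam : ℝ) * ‖g H lam‖ ^ 2 with hR
  set A := ∑ lam : ZMod p, (r H L N a lam : ℝ) ^ ((3 : ℝ) / 2) with hA
  set B := ∑ lam : ZMod p, ‖g H lam‖ ^ 6 with hB
  have hA0 : 0 ≤ A := by
    rw [hA]; exact Finset.sum_nonneg fun lam _ => Real.rpow_nonneg (by positivity) _
  have hB0 : 0 ≤ B := by rw [hB]; positivity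
  have hR0 : 0 ≤ R := by rw [hR]; positivity
  have f2 : h * Q = R := by
    rw [hR, ← fiber_sum H L N a (fun lam => ‖g H lam‖ ^ 2), PP,
      Finset.sum_product, hQ, Finset.mul_sum]
    refine Finset.sum_congr rfl fun n _ => ?_
    have e : ∀ x : H, ‖g H (key H a (n, x))‖ ^ 2
        = ‖g H ((a : ZMod p) * (n : ZMod p))‖ ^ 2 := by
      intro x
      rw [key]
      simp only
      rw [g_mul]
    rw [Finset.sum_congr rfl fun x _ => e x, Finset.sum_const, nsmul_eq_mul,
      Finset.card_univ, ← Nat.card_eq_fintype_card, ← hh, mul_comm]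
  have f3 : R ≤ A ^ ((2 : ℝ) / 3) * B ^ ((1 : ℝ) / 3) := by
    have hpq : Real.HolderConjugate ((3 : ℝ) / 2) 3 := by constructor <;> norm_num
    have H1 := Real.inner_le_Lp_mul_Lq (s := Finset.univ)
      (f := fun lam => (r H L N a lam : ℝ))
      (g := fun lam => ‖g H lam‖ ^ 2) hpq
    have e1 : ∀ lam : ZMod p, |(r H L N a lam : ℝ)| ^ ((3 : ℝ) / 2)
        = (r H L N a lam : ℝ) ^ ((3 : ℝ) / 2) := fun lam => by
      rw [abs_of_nonneg (by positivity)]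
    have e2 : ∀ lam : ZMod p, |‖g H lam‖ ^ 2| ^ (3 : ℝ)
        = ‖g H lam‖ ^ 6 := fun lam => by
      rw [abs_of_nonneg (by positivity), show ((3 : ℝ)) = ((3 : ℕ) : ℝ) by norm_num,
        Real.rpow_natCast, ← pow_mul]
    simp only [e1, e2] at H1
    rw [show (1 : ℝ) / ((3 : ℝ) / 2) = 2 / 3 by norm_num] at H1
    rw [hR, hA, hB]
    exact H1
  have f3c : R ^ 3 ≤ A ^ 2 * B := by
    calc R ^ 3 ≤ (A ^ ((2 : ℝ) / 3) * B ^ ((1 : ℝ) / 3)) ^ 3 := pow_le_pow_left₀ hR0 f3 3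
      _ = A ^ 2 * B := by
        rw [mul_pow, ← Real.rpow_natCast (A ^ ((2 : ℝ) / 3)) 3,
          ← Real.rpow_natCast (B ^ ((1 : ℝ) / 3)) 3,
          ← Real.rpow_mul hA0, ← Real.rpow_mul hB0,
          show ((2 : ℝ) / 3) * ((3 : ℕ) : ℝ) = ((2 : ℕ) : ℝ) by push_cast; ring,
          show ((1 : ℝ) / 3) * ((3 : ℕ) : ℝ) = (1 : ℝ) by push_cast; ring,
          Real.rpow_natCast, Real.rpow_one]
  have f4 : A ^ 2 ≤ ((N : ℝ) * h) * (J p L N H : ℝ) := by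
    have hAe : A = ∑ lam : ZMod p,
        (r H L N a lam : ℝ) ^ ((1 : ℝ) / 2) * (r H L N a lam : ℝ) := by
      rw [hA]
      refine Finset.sum_congr rfl fun lam _ => ?_
      rw [show (3 : ℝ) / 2 = 1 / 2 + 1 by norm_num,
        Real.rpow_add' (by positivity) (by norm_num), Real.rpow_one]
    have cs := Finset.sum_mul_sq_le_sq_mul_sq Finset.univ
      (fun lam => (r H L N a lam : ℝ) ^ ((1 : ℝ) / 2))
      (fun lam => (r H L N a lam : ℝ))
    have e3 : ∀ lam : ZMod p, ((r H L N a lam : ℝ) ^ ((1 : ℝ) / 2)) ^ 2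
        = (r H L N a lam : ℝ) := by
      intro lam
      rw [← Real.rpow_natCast ((r H L N a lam : ℝ) ^ ((1 : ℝ) / 2)) 2,
        ← Real.rpow_mul (by positivity),
        show ((1 : ℝ) / 2) * ((2 : ℕ) : ℝ) = 1 by push_cast; ring, Real.rpow_one]
    simp only [e3] at cs
    rw [hAe]
    calc (∑ lam : ZMod p, (r H L N a lam : ℝ) ^ ((1 : ℝ) / 2) * (r H L N a lam : ℝ)) ^ 2
        ≤ (∑ lam : ZMod p, (r H L N a lam : ℝ))
          * (∑ lam : ZMod p, (r H L N a lam : ℝ) ^ 2) := cs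
      _ ≤ ((N : ℝ) * h) * (J p L N H : ℝ) := by
        rw [hsum_r]
        exact mul_le_mul_of_nonneg_left hsum_r2 (by positivity)
  have hlog0 : 0 ≤ Real.log h := Real.log_nonneg hh1
  have f5 : B ≤ (p : ℝ) * (C₃ * h ^ 4 * Real.log h) := by
    rw [hB, parseval6]
    have : (T p 3 H : ℝ) ≤ C₃ * h ^ 4 * Real.log h := hTbound
    exact mul_le_mul_of_nonneg_left this hp0.le
  have step1 : S ^ 6 ≤ (N : ℝ) ^ 4 * h ^ 2 * (p : ℝ) * (J p L N H : ℝ)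
      * (C₃ * Real.log h) := by
    have hh3 : (0 : ℝ) < h ^ 3 := by positivity
    have big : h ^ 3 * S ^ 6 ≤ h ^ 3 * ((N : ℝ) ^ 4 * h ^ 2 * (p : ℝ) * (J p L N H : ℝ)
        * (C₃ * Real.log h)) := by
      calc h ^ 3 * S ^ 6 = h ^ 3 * (S ^ 2) ^ 3 := by ring
        _ ≤ h ^ 3 * ((N : ℝ) * Q) ^ 3 := by gcongr
        _ = (N : ℝ) ^ 3 * (h * Q) ^ 3 := by ring
        _ = (N : ℝ) ^ 3 * R ^ 3 := by rw [f2]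
        _ ≤ (N : ℝ) ^ 3 * (A ^ 2 * B) := by gcongr
        _ ≤ (N : ℝ) ^ 3 * ((((N : ℝ) * h) * (J p L N H : ℝ))
            * ((p : ℝ) * (C₃ * h ^ 4 * Real.log h))) := by
          refine mul_le_mul_of_nonneg_left ?_ (by positivity)
          exact mul_le_mul f4 f5 hB0 (by positivity)
        _ = h ^ 3 * ((N : ℝ) ^ 4 * h ^ 2 * (p : ℝ) * (J p L N H : ℝ)
            * (C₃ * Real.log h)) := by ring
    exact le_of_mul_le_mul_left big hh3
  set Γ := 1 + h / (N : ℝ) + (N : ℝ) * h / (p : ℝ)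
    + h ^ ((3 : ℝ) / 4) / (p : ℝ) ^ ((1 : ℝ) / 4) with hGdef
  have hG0 : 0 ≤ Γ := by rw [hGdef]; positivity
  have hJG : (h ^ (2 : ℕ) + (N : ℝ) * h + (N : ℝ) ^ (2 : ℕ) * h ^ (2 : ℕ) / (p : ℝ)
      + (N : ℝ) * h ^ ((7 : ℝ) / 4) / (p : ℝ) ^ ((1 : ℝ) / 4)) = (N : ℝ) * h * Γ := by
    rw [hGdef, show (7 : ℝ) / 4 = 1 + 3 / 4 by norm_num,
      Real.rpow_add' (by positivity) (by norm_num), Real.rpow_one]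
    have hp14 : (0 : ℝ) < (p : ℝ) ^ ((1 : ℝ) / 4) := Real.rpow_pos_of_pos hp0 _
    field_simp
    ring
  have hJle : (J p L N H : ℝ) ≤ CJ * (p : ℝ) ^ ε * ((N : ℝ) * h * Γ) := by
    rw [← hJG]
    exact hJbound
  have step2 : S ^ 6 ≤ (CJ * C₃ * Real.log h) * (p : ℝ) ^ ε
      * ((N : ℝ) ^ 5 * h ^ 3 * (p : ℝ) * Γ) := by
    calc S ^ 6 ≤ (N : ℝ) ^ 4 * h ^ 2 * (p : ℝ) * (J p L N H : ℝ)
        * (C₃ * Real.log h) := step1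
      _ ≤ (N : ℝ) ^ 4 * h ^ 2 * (p : ℝ) * (CJ * (p : ℝ) ^ ε * ((N : ℝ) * h * Γ))
        * (C₃ * Real.log h) := by
        refine mul_le_mul_of_nonneg_right ?_ (by positivity)
        exact mul_le_mul_of_nonneg_left hJle (by positivity)
      _ = (CJ * C₃ * Real.log h) * (p : ℝ) ^ ε
        * ((N : ℝ) ^ 5 * h ^ 3 * (p : ℝ) * Γ) := by ring
  have hhp : h ≤ (p : ℝ) := by
    have h12 : (p : ℝ) ^ ((1 : ℝ) / 2) ≤ (p : ℝ) := by
      nth_rewrite 2 [← Real.rpow_one (p : ℝ)]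
      exact Real.rpow_le_rpow_of_exponent_le (by linarith) (by norm_num)
    linarith
  have hlogle : Real.log h ≤ (p : ℝ) ^ (5 * ε) / (5 * ε) := by
    have l1 : Real.log h ≤ Real.log (p : ℝ) := Real.log_le_log hh0 hhp
    exact l1.trans (Real.log_le_rpow_div hp0.le (by positivity))
  have hC6 : CJ * C₃ / (5 * ε) ≤ C ^ 6 := by
    have hX0 : (0 : ℝ) ≤ (CJ * C₃ / (5 * ε)) ^ ((1 : ℝ) / 6) :=
      Real.rpow_nonneg (by positivity) _
    have hXC : (CJ * C₃ / (5 * ε)) ^ ((1 : ℝ) / 6) ≤ C := le_max_right _ _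
    have := pow_le_pow_left₀ hX0 hXC 6
    rwa [← Real.rpow_natCast ((CJ * C₃ / (5 * ε)) ^ ((1 : ℝ) / 6)) 6,
      ← Real.rpow_mul (by positivity),
      show ((1 : ℝ) / 6) * ((6 : ℕ) : ℝ) = 1 by push_cast; ring, Real.rpow_one] at this
  set Δ : ℝ := ((p : ℝ) / ((N : ℝ) * h ^ (3 : ℕ))) * Γ with hDdef
  have hD0 : 0 ≤ Δ := by rw [hDdef]; positivity
  have hRHS0 : 0 ≤ C * (N : ℝ) * h * Δ ^ ((1 : ℝ) / 6) * (p : ℝ) ^ ε := by positivity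
  apply le_of_pow_le_pow_left₀ (by norm_num : (6 : ℕ) ≠ 0) hRHS0
  have eD : (Δ ^ ((1 : ℝ) / 6)) ^ (6 : ℕ) = Δ := by
    rw [← Real.rpow_natCast (Δ ^ ((1 : ℝ) / 6)) 6, ← Real.rpow_mul hD0,
      show ((1 : ℝ) / 6) * ((6 : ℕ) : ℝ) = 1 by push_cast; ring, Real.rpow_one]
  have ePe : ((p : ℝ) ^ ε) ^ (6 : ℕ) = (p : ℝ) ^ (6 * ε) := by
    rw [← Real.rpow_natCast ((p : ℝ) ^ ε) 6, ← Real.rpow_mul hp0.le,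
      show ε * ((6 : ℕ) : ℝ) = 6 * ε by push_cast; ring]
  have final_eq : (C * (N : ℝ) * h * Δ ^ ((1 : ℝ) / 6) * (p : ℝ) ^ ε) ^ 6
      = C ^ 6 * (p : ℝ) ^ (6 * ε) * ((N : ℝ) ^ 5 * h ^ 3 * (p : ℝ) * Γ) := by
    rw [mul_pow, mul_pow, mul_pow, mul_pow, eD, ePe, hDdef]
    field_simp
  rw [final_eq]
  calc S ^ 6 ≤ (CJ * C₃ * Real.log h) * (p : ℝ) ^ ε
      * ((N : ℝ) ^ 5 * h ^ 3 * (p : ℝ) * Γ) := step2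
    _ ≤ (CJ * C₃ * ((p : ℝ) ^ (5 * ε) / (5 * ε))) * (p : ℝ) ^ ε
      * ((N : ℝ) ^ 5 * h ^ 3 * (p : ℝ) * Γ) := by gcongr
    _ = (CJ * C₃ / (5 * ε)) * ((p : ℝ) ^ (5 * ε) * (p : ℝ) ^ ε)
      * ((N : ℝ) ^ 5 * h ^ 3 * (p : ℝ) * Γ) := by ring
    _ = (CJ * C₃ / (5 * ε)) * (p : ℝ) ^ (6 * ε)
      * ((N : ℝ) ^ 5 * h ^ 3 * (p : ℝ) * Γ) := by
      rw [← Real.rpow_add hp0, show 5 * ε + ε = 6 * ε by ring]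
    _ ≤ C ^ 6 * (p : ℝ) ^ (6 * ε) * ((N : ℝ) ^ 5 * h ^ 3 * (p : ℝ) * Γ) := by gcongr
end
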